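/- Under the block-exchangeable structure with α_1,α_3 ∈ [0,1), q_n, p_n−q_n → ∞, if there exists η > 0 with |α_2| ≤ (1−η)·√((1−α_1)/(1−α_3))·α_1·L̲ where L̲ = liminf q_n/m_n, then the transformed strong irrepresentable condition holds for large n: there is η₀ > 0 such that every entry of |V(2) C^n_{21}(C^n_{11})^{-1} V(1)^{-1} sign(γ_{(1)})| is at most 1 − η₀. -/

import Mathlib

open Matrix Filter

/-- The `q×q` exchangeable matrix: `1` on the diagonal, `α` off-diagonal. -/
noncomputable def exchMat (q : ℕ) (α : ℝ) : Matrix (Fin q) (Fin q) ℝ :=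
  Matrix.of fun i j => if i = j then 1 else α

/-- The `r×q` constant matrix with all entries `α`. -/
noncomputable def constMat (r q : ℕ) (α : ℝ) : Matrix (Fin r) (Fin q) ℝ :=
  Matrix.of fun _ _ => α

/-- The block-exchangeable correlation matrix. -/
noncomputable def blockExch (q r : ℕ) (α1 α2 α3 : ℝ) :
    Matrix (Fin q ⊕ Fin r) (Fin q ⊕ Fin r) ℝ :=
  Matrix.fromBlocks (exchMat q α1) (constMat q r α2) (constMat r q α2) (exchMat r α3)

/-- Diagonal matrix `V(1)` of conditional standard deviations `√(1/d_{jj})`, relevant block. -/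
noncomputable def V1mat (q r : ℕ) (α1 α2 α3 : ℝ) : Matrix (Fin q) (Fin q) ℝ :=
  Matrix.diagonal fun j =>
    Real.sqrt (1 / ((blockExch q r α1 α2 α3)⁻¹ (Sum.inl j) (Sum.inl j)))

/-- Diagonal matrix `V(2)` of conditional standard deviations `√(1/d_{jj})`, irrelevant block. -/
noncomputable def V2mat (q r : ℕ) (α1 α2 α3 : ℝ) : Matrix (Fin r) (Fin r) ℝ :=
  Matrix.diagonal fun j =>
    Real.sqrt (1 / ((blockExch q r α1 α2 α3)⁻¹ (Sum.inr j) (Sum.inr j)))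

/-! ### Auxiliary lemmas -/

lemma sum_ite_base {q : ℕ} (j : Fin q) (u v : ℝ) :
    ∑ k : Fin q, (if k = j then u else v) = u + ((q:ℝ)-1)*v := by
  have h : ∀ k : Fin q, (if k = j then u else v) = v + (if k = j then u - v else 0) := by
    intro k; split <;> ring
  rw [Finset.sum_congr rfl fun k _ => h k, Finset.sum_add_distrib, Finset.sum_const,
    Finset.sum_ite_eq' Finset.univ j fun _ => u - v]
  simp [Finset.card_univ]; ring

lemma sum_ite_base' {q : ℕ} (j : Fin q) (u v : ℝ) :
    ∑ k : Fin q, (if j = k then u else v) = u + ((q:ℝ)-1)*v := by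
  rw [Finset.sum_congr rfl fun k _ => by
    rw [show (if j = k then u else v) = (if k = j then u else v) by simp [eq_comm]]]
  exact sum_ite_base j u v

lemma sum_if_mul {q : ℕ} (i j : Fin q) (A B u v : ℝ) :
    ∑ k : Fin q, (if i = k then A else B) * (if k = j then u else v)
      = B*(u + ((q:ℝ)-1)*v) + (A-B)*(if i = j then u else v) := by
  have h : ∀ k : Fin q, (if i = k then A else B) * (if k = j then u else v)
      = B * (if k = j then u else v) + (if k = i then (A-B) * (if k = j then u else v) else 0) := by
    intro k
    by_cases hk : i = k
    · subst hk; simp; split <;> ring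
    · simp [hk, Ne.symm hk]
  rw [Finset.sum_congr rfl fun k _ => h k, Finset.sum_add_distrib,
    Finset.sum_ite_eq' Finset.univ i, ← Finset.mul_sum, sum_ite_base j u v]
  simp

/-- `P = 1 + (q-1)α`, written without natural subtraction. -/
noncomputable def Pv (q : ℕ) (α : ℝ) : ℝ := 1 - α + α * q

lemma Pv_pos {q : ℕ} {α : ℝ} (h0 : 0 ≤ α) (h1 : α < 1) : 0 < Pv q α := by
  have : (0:ℝ) ≤ α * q := by positivity
  unfold Pv; linarith

noncomputable def Nmat (q : ℕ) (α : ℝ) : Matrix (Fin q) (Fin q) ℝ :=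
  Matrix.of fun i j => (if i = j then 1/(1-α) else 0) - α/((1-α) * Pv q α)

lemma exch_mul_N {q : ℕ} {α : ℝ} (h0 : 0 ≤ α) (h1 : α < 1) :
    exchMat q α * Nmat q α = 1 := by
  have ha : (1:ℝ) - α ≠ 0 := by linarith
  have hP : Pv q α ≠ 0 := (Pv_pos h0 h1).ne'
  ext i j
  rw [Matrix.mul_apply]
  simp only [exchMat, Nmat, Matrix.of_apply]
  have h : ∀ k : Fin q, (if i = k then (1:ℝ) else α) *
      ((if k = j then 1/(1-α) else 0) - α/((1-α) * Pv q α))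
      = (if i = k then (1:ℝ) else α) *
      (if k = j then 1/(1-α) - α/((1-α) * Pv q α) else -(α/((1-α) * Pv q α))) := by
    intro k; rcases eq_or_ne k j with h | h <;> simp [h]
  rw [Finset.sum_congr rfl fun k _ => h k, sum_if_mul]
  rw [Matrix.one_apply]
  rcases eq_or_ne i j with hij | hij <;> simp only [hij, if_true, if_false, Ne, not_false_iff] <;>
    · simp only [Pv] at hP ⊢
      field_simp
      ring

noncomputable def Dv (q r : ℕ) (α1 α2 α3 : ℝ) : ℝ := Pv q α1 * Pv r α3 - α2^2 * q * r
noncomputable def xv (q r : ℕ) (α1 α2 α3 : ℝ) : ℝ :=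
  (α2^2 * r - α1 * Pv r α3) / ((1-α1) * Dv q r α1 α2 α3)
noncomputable def zv (q r : ℕ) (α1 α2 α3 : ℝ) : ℝ :=
  (α2^2 * q - α3 * Pv q α1) / ((1-α3) * Dv q r α1 α2 α3)
noncomputable def yv (q r : ℕ) (α1 α2 α3 : ℝ) : ℝ := -α2 / Dv q r α1 α2 α3

lemma Dv_ge {q r : ℕ} {α1 α2 α3 : ℝ} (h1 : 0 ≤ α1) (h1' : α1 < 1) (h3 : 0 ≤ α3) (h3' : α3 < 1)
    (h2 : α2^2 ≤ α1 * α3) : (1-α1)*(1-α3) ≤ Dv q r α1 α2 α3 := by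
  have hq : (0:ℝ) ≤ q := Nat.cast_nonneg q
  have hr : (0:ℝ) ≤ r := Nat.cast_nonneg r
  unfold Dv Pv
  nlinarith [mul_nonneg hq hr, mul_nonneg (mul_nonneg h1 hq) (sub_nonneg.2 h3'.le),
    mul_nonneg (mul_nonneg h3 hr) (sub_nonneg.2 h1'.le), mul_nonneg h1 hq, mul_nonneg h3 hr]

lemma Dv_pos {q r : ℕ} {α1 α2 α3 : ℝ} (h1 : 0 ≤ α1) (h1' : α1 < 1) (h3 : 0 ≤ α3) (h3' : α3 < 1)
    (h2 : α2^2 ≤ α1 * α3) : 0 < Dv q r α1 α2 α3 :=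
  lt_of_lt_of_le (by nlinarith) (Dv_ge h1 h1' h3 h3' h2)

noncomputable def Emat (q r : ℕ) (α1 α2 α3 : ℝ) :
    Matrix (Fin q ⊕ Fin r) (Fin q ⊕ Fin r) ℝ :=
  Matrix.fromBlocks
    (Matrix.of fun i j => (if i = j then 1/(1-α1) else 0) + xv q r α1 α2 α3)
    (Matrix.of fun _ _ => yv q r α1 α2 α3)
    (Matrix.of fun _ _ => yv q r α1 α2 α3)
    (Matrix.of fun i j => (if i = j then 1/(1-α3) else 0) + zv q r α1 α2 α3)

lemma block_mul_E {q r : ℕ} {α1 α2 α3 : ℝ} (h1 : 0 ≤ α1) (h1' : α1 < 1)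
    (h3 : 0 ≤ α3) (h3' : α3 < 1) (hD : Dv q r α1 α2 α3 ≠ 0) :
    blockExch q r α1 α2 α3 * Emat q r α1 α2 α3 = 1 := by
  have ha : (1:ℝ) - α1 ≠ 0 := by linarith
  have hb : (1:ℝ) - α3 ≠ 0 := by linarith
  have hDD : Pv q α1 * Pv r α3 - α2^2 * q * r ≠ 0 := hD
  ext i j
  rcases i with i | i <;> rcases j with j | j <;>
    rw [Matrix.mul_apply, Fintype.sum_sum_type] <;>
    simp only [blockExch, Emat, Matrix.fromBlocks_apply₁₁, Matrix.fromBlocks_apply₁₂,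
      Matrix.fromBlocks_apply₂₁, Matrix.fromBlocks_apply₂₂, exchMat, constMat, Matrix.of_apply]
  · have h : ∀ k : Fin q, (if i = k then (1:ℝ) else α1) *
        ((if k = j then 1/(1-α1) else 0) + xv q r α1 α2 α3)
        = (if i = k then (1:ℝ) else α1) *
          (if k = j then 1/(1-α1) + xv q r α1 α2 α3 else xv q r α1 α2 α3) := by
      intro k; rcases eq_or_ne k j with h | h <;> simp [h]
    rw [Finset.sum_congr rfl fun k _ => h k, sum_if_mul, Finset.sum_const, Finset.card_univ,
      Fintype.card_fin, Matrix.one_apply]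
    rcases eq_or_ne i j with hij | hij <;>
      simp only [hij, if_true, Sum.inl.injEq, if_false, nsmul_eq_mul] <;>
      · unfold xv yv at *
        field_simp
        unfold Dv Pv
        ring
  · have h : ∀ k : Fin r, α2 * ((if k = j then 1/(1-α3) else 0) + zv q r α1 α2 α3)
        = (if k = j then α2 * (1/(1-α3) + zv q r α1 α2 α3) else α2 * zv q r α1 α2 α3) := by
      intro k; rcases eq_or_ne k j with h | h <;> simp [h]
    rw [Finset.sum_congr rfl fun k _ => h k, sum_ite_base, ← Finset.sum_mul, sum_ite_base' i,
      Matrix.one_apply, if_neg (by simp)]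
    unfold yv zv at *
    field_simp
    unfold Dv Pv
    ring
  · have h : ∀ k : Fin q, α2 * ((if k = j then 1/(1-α1) else 0) + xv q r α1 α2 α3)
        = (if k = j then α2 * (1/(1-α1) + xv q r α1 α2 α3) else α2 * xv q r α1 α2 α3) := by
      intro k; rcases eq_or_ne k j with h | h <;> simp [h]
    rw [Finset.sum_congr rfl fun k _ => h k, sum_ite_base, ← Finset.sum_mul, sum_ite_base' i,
      Matrix.one_apply, if_neg (by simp)]
    unfold yv xv at *
    field_simp
    unfold Dv Pv
    ring
  · have h : ∀ k : Fin r, (if i = k then (1:ℝ) else α3) *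
        ((if k = j then 1/(1-α3) else 0) + zv q r α1 α2 α3)
        = (if i = k then (1:ℝ) else α3) *
          (if k = j then 1/(1-α3) + zv q r α1 α2 α3 else zv q r α1 α2 α3) := by
      intro k; rcases eq_or_ne k j with h | h <;> simp [h]
    rw [Finset.sum_congr rfl fun k _ => h k, sum_if_mul, Finset.sum_const, Finset.card_univ,
      Fintype.card_fin, Matrix.one_apply]
    rcases eq_or_ne i j with hij | hij <;>
      simp only [hij, if_true, Sum.inr.injEq, if_false, nsmul_eq_mul] <;>
      · unfold yv zv at *
        field_simp
        unfold Dv Pv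
        ring

lemma quadform (q r : ℕ) (α1 α2 α3 t w : ℝ) :
    dotProduct (Sum.elim (fun _ : Fin q => t) (fun _ : Fin r => w))
      (blockExch q r α1 α2 α3 *ᵥ Sum.elim (fun _ : Fin q => t) (fun _ : Fin r => w))
    = (q:ℝ)*(1 + ((q:ℝ)-1)*α1)*t^2 + 2*q*r*α2*t*w + (r:ℝ)*(1 + ((r:ℝ)-1)*α3)*w^2 := by
  have inner1 : ∀ i : Fin q, ∑ k : Fin q, (if i = k then (1:ℝ) else α1) * t
      = (1 + ((q:ℝ)-1)*α1) * t := by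
    intro i; rw [← Finset.sum_mul, sum_ite_base' i]
  have inner2 : ∀ i : Fin r, ∑ k : Fin r, (if i = k then (1:ℝ) else α3) * w
      = (1 + ((r:ℝ)-1)*α3) * w := by
    intro i; rw [← Finset.sum_mul, sum_ite_base' i]
  simp only [dotProduct, Matrix.mulVec, Fintype.sum_sum_type, Sum.elim_inl, Sum.elim_inr,
    blockExch, Matrix.fromBlocks_apply₁₁, Matrix.fromBlocks_apply₁₂, Matrix.fromBlocks_apply₂₁,
    Matrix.fromBlocks_apply₂₂, exchMat, constMat, Matrix.of_apply]
  simp only [inner1, inner2, Finset.sum_const, Finset.card_univ, Fintype.card_fin,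
    smul_eq_mul, nsmul_eq_mul]
  ring

lemma quad_ineq {q r : ℕ} {α1 α2 α3 : ℝ} (h1 : 0 ≤ α1)
    (hpd : (blockExch q r α1 α2 α3).PosDef) (hq : 1 ≤ q) (hr : 1 ≤ r) :
    α2^2 * q * r < (1 + ((q:ℝ)-1)*α1) * (1 + ((r:ℝ)-1)*α3) := by
  set P := 1 + ((q:ℝ)-1)*α1 with hP
  set R := 1 + ((r:ℝ)-1)*α3 with hR
  have hPpos : 0 < P := by
    have h1q : (1:ℝ) ≤ q := by exact_mod_cast hq
    have : 0 ≤ ((q:ℝ)-1)*α1 := mul_nonneg (by linarith) h1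
    linarith
  have hqpos : (0:ℝ) < q := by exact_mod_cast hq
  have hrpos : (0:ℝ) < r := by exact_mod_cast hr
  set t := -((q:ℝ)*r*α2) with ht
  set w := (q:ℝ)*P with hw
  set u : (Fin q ⊕ Fin r) → ℝ := Sum.elim (fun _ => t) (fun _ => w) with hu
  have hune : u ≠ 0 := by
    intro h
    have := congrFun h (Sum.inr ⟨0, hr⟩)
    simp [hu, hw] at this
    rcases this with h' | h'
    · omega
    · exact hPpos.ne' h'
  have key := hpd.dotProduct_mulVec_pos hune
  rw [show star u = u from star_trivial u, hu, quadform] at key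
  have hid : (q:ℝ)*P*t^2 + 2*q*r*α2*t*w + (r:ℝ)*R*w^2
      = (q:ℝ)^2*r*P*(P*R - α2^2*q*r) := by rw [ht, hw]; ring
  rw [hid] at key
  nlinarith [mul_pos (mul_pos (pow_pos hqpos 2) hrpos) hPpos]

lemma Pv_eq (q : ℕ) (α : ℝ) : Pv q α = 1 + ((q:ℝ)-1)*α := by unfold Pv; ring

lemma colsum {q : ℕ} {α : ℝ} (h0 : 0 ≤ α) (h1 : α < 1) (j : Fin q) :
    ∑ k : Fin q, Nmat q α k j = 1 / Pv q α := by
  have ha : (1:ℝ) - α ≠ 0 := by linarith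
  have hP : Pv q α ≠ 0 := (Pv_pos h0 h1).ne'
  simp only [Nmat, Matrix.of_apply]
  rw [Finset.sum_sub_distrib, Finset.sum_ite_eq' Finset.univ j, Finset.sum_const,
    Finset.card_univ, Fintype.card_fin]
  simp only [Finset.mem_univ, if_true, nsmul_eq_mul]
  simp only [Pv] at hP ⊢
  field_simp
  ring

/-- The full entry formula for the transformed irrepresentability vector. -/
lemma entry_eq {q r : ℕ} {α1 α2 α3 : ℝ} (h1 : 0 ≤ α1) (h1' : α1 < 1) (h3 : 0 ≤ α3) (h3' : α3 < 1)
    (hD : Dv q r α1 α2 α3 ≠ 0) (hd1 : 0 < 1/(1-α1) + xv q r α1 α2 α3)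
    (s : Fin q → ℝ) (i : Fin r) :
    ((V2mat q r α1 α2 α3 * constMat r q α2 * (exchMat q α1)⁻¹ * (V1mat q r α1 α2 α3)⁻¹) *ᵥ s) i
      = Real.sqrt (1/(1/(1-α3) + zv q r α1 α2 α3)) *
        (Real.sqrt (1/(1/(1-α1) + xv q r α1 α2 α3)))⁻¹ * α2 * (∑ j, s j) / Pv q α1 := by
  have hEinv : (blockExch q r α1 α2 α3)⁻¹ = Emat q r α1 α2 α3 :=
    Matrix.inv_eq_right_inv (block_mul_E h1 h1' h3 h3' hD)
  have hNinv : (exchMat q α1)⁻¹ = Nmat q α1 := Matrix.inv_eq_right_inv (exch_mul_N h1 h1')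
  set v1 := Real.sqrt (1/(1/(1-α1) + xv q r α1 α2 α3)) with hv1
  set v2 := Real.sqrt (1/(1/(1-α3) + zv q r α1 α2 α3)) with hv2
  have hV1 : V1mat q r α1 α2 α3 = Matrix.diagonal (fun _ : Fin q => v1) := by
    have he : (fun j : Fin q =>
        Real.sqrt (1 / (Emat q r α1 α2 α3 (Sum.inl j) (Sum.inl j)))) = fun _ => v1 := by
      funext j; rw [hv1]; simp [Emat]
    unfold V1mat; rw [hEinv, he]
  have hV2 : V2mat q r α1 α2 α3 = Matrix.diagonal (fun _ : Fin r => v2) := by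
    have he : (fun j : Fin r =>
        Real.sqrt (1 / (Emat q r α1 α2 α3 (Sum.inr j) (Sum.inr j)))) = fun _ => v2 := by
      funext j; rw [hv2]; simp [Emat]
    unfold V2mat; rw [hEinv, he]
  have hv1pos : 0 < v1 := by rw [hv1]; exact Real.sqrt_pos.2 (by positivity)
  have hV1inv : (V1mat q r α1 α2 α3)⁻¹ = Matrix.diagonal (fun _ : Fin q => v1⁻¹) := by
    rw [hV1]
    refine Matrix.inv_eq_right_inv ?_
    rw [Matrix.diagonal_mul_diagonal]
    have : (fun j : Fin q => v1 * v1⁻¹) = fun _ => (1:ℝ) := by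
      funext j; exact mul_inv_cancel₀ hv1pos.ne'
    rw [this, Matrix.diagonal_one]
  have hM : Matrix.diagonal (fun _ : Fin r => v2) * constMat r q α2 * Nmat q α1 *
      Matrix.diagonal (fun _ : Fin q => v1⁻¹)
      = Matrix.of (fun _ _ => v2 * α2 * (1/Pv q α1) * v1⁻¹) := by
    ext i' j'
    rw [Matrix.mul_diagonal, Matrix.mul_apply]
    simp only [Matrix.diagonal_mul, constMat, Matrix.of_apply]
    rw [← Finset.mul_sum, colsum h1 h1' j']
  rw [hV2, hNinv, hV1inv, hM]
  simp only [Matrix.mulVec, dotProduct, Matrix.of_apply]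
  rw [← Finset.mul_sum]
  ring

lemma d1_bounds {q r : ℕ} {α1 α2 α3 : ℝ} (h1 : 0 ≤ α1) (h1' : α1 < 1) (h3 : 0 ≤ α3) (h3' : α3 < 1)
    (h2 : α2^2 ≤ α1*α3) (hq : 1 ≤ q) :
    (1 - 1/(q:ℝ))/(1-α1) ≤ 1/(1-α1) + xv q r α1 α2 α3 ∧
      1/(1-α1) + xv q r α1 α2 α3 ≤ 1/(1-α1) := by
  have ha : (0:ℝ) < 1 - α1 := by linarith
  have hD := Dv_pos (q := q) (r := r) h1 h1' h3 h3' h2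
  have hRpos := Pv_pos (q := r) h3 h3'
  have hq0 : (0:ℝ) < q := by exact_mod_cast hq
  have hr0 : (0:ℝ) ≤ r := Nat.cast_nonneg r
  constructor
  · have hx : -(1/((1-α1)*(q:ℝ))) ≤ xv q r α1 α2 α3 := by
      unfold xv
      rw [← neg_div ((1-α1)*(q:ℝ)) 1, div_le_div_iff₀ (by positivity) (mul_pos ha hD)]
      unfold Dv Pv at *
      nlinarith [mul_pos ha ha, hRpos, mul_nonneg (mul_nonneg ha.le ha.le) hRpos.le]
    have heq : (1 - 1/(q:ℝ))/(1-α1) = 1/(1-α1) - 1/((1-α1)*(q:ℝ)) := by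
      field_simp
    linarith
  · have hx : xv q r α1 α2 α3 ≤ 0 := by
      apply div_nonpos_iff.2
      right
      constructor
      · unfold Pv
        nlinarith [mul_nonneg h1 (sub_nonneg.2 h3'.le), mul_le_mul_of_nonneg_right h2 hr0,
          mul_nonneg (mul_nonneg h1 h3) hr0]
      · exact (mul_pos ha hD).le
    linarith

lemma d2_bounds {q r : ℕ} {α1 α2 α3 : ℝ} (h1 : 0 ≤ α1) (h1' : α1 < 1) (h3 : 0 ≤ α3) (h3' : α3 < 1)
    (h2 : α2^2 ≤ α1*α3) (hr : 1 ≤ r) :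
    (1 - 1/(r:ℝ))/(1-α3) ≤ 1/(1-α3) + zv q r α1 α2 α3 ∧
      1/(1-α3) + zv q r α1 α2 α3 ≤ 1/(1-α3) := by
  have hb : (0:ℝ) < 1 - α3 := by linarith
  have hD := Dv_pos (q := q) (r := r) h1 h1' h3 h3' h2
  have hPpos := Pv_pos (q := q) h1 h1'
  have hr0 : (0:ℝ) < r := by exact_mod_cast hr
  have hq0 : (0:ℝ) ≤ q := Nat.cast_nonneg q
  constructor
  · have hx : -(1/((1-α3)*(r:ℝ))) ≤ zv q r α1 α2 α3 := by
      unfold zv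
      rw [← neg_div ((1-α3)*(r:ℝ)) 1, div_le_div_iff₀ (by positivity) (mul_pos hb hD)]
      unfold Dv Pv at *
      nlinarith [mul_pos hb hb, hPpos, mul_nonneg (mul_nonneg hb.le hb.le) hPpos.le]
    have heq : (1 - 1/(r:ℝ))/(1-α3) = 1/(1-α3) - 1/((1-α3)*(r:ℝ)) := by
      field_simp
    linarith
  · have hx : zv q r α1 α2 α3 ≤ 0 := by
      apply div_nonpos_iff.2
      right
      constructor
      · unfold Pv
        nlinarith [mul_nonneg h3 (sub_nonneg.2 h1'.le), mul_le_mul_of_nonneg_right h2 hq0,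
          mul_nonneg (mul_nonneg h1 h3) hq0]
      · exact (mul_pos hb hD).le
    linarith

set_option maxHeartbeats 1600000 in
/-- Under the block-exchangeable structure with `α₁, α₃ ∈ [0,1)`,
`m_n, q_n, p_n − q_n → ∞` and `C^n` positive definite: if there exists `η > 0` with
`|α₂| ≤ (1−η)·√((1−α₁)/(1−α₃))·α₁·L̲`, `L̲ = liminf q_n/m_n`, then the transformed strong
irrepresentable condition holds for large `n`: there is `η₀ > 0` such that eventually every
entry of `|V(2) C^n_{21}(C^n_{11})⁻¹ V(1)⁻¹ sign(γ_{(1)})|` is at most `1 − η₀`. -/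
theorem stmt12 (α1 α2 α3 : ℝ) (hα1 : 0 ≤ α1 ∧ α1 < 1) (hα3 : 0 ≤ α3 ∧ α3 < 1)
    (q r m : ℕ → ℕ) (s : ∀ n, Fin (q n) → ℝ)
    (hs : ∀ n i, s n i = 1 ∨ s n i = -1)
    (hm : ∀ n, (m n : ℝ) = |∑ i, s n i|)
    (hq : Tendsto q atTop atTop) (hr : Tendsto r atTop atTop)
    (hmtop : Tendsto m atTop atTop)
    (hpd : ∀ n, (blockExch (q n) (r n) α1 α2 α3).PosDef)
    (η : ℝ) (hη : 0 < η)
    (hbound : |α2| ≤ (1 - η) * Real.sqrt ((1 - α1) / (1 - α3)) * α1 *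
      liminf (fun n => (q n : ℝ) / (m n : ℝ)) atTop) :
    ∃ η0 > 0, ∀ᶠ n in atTop, ∀ i : Fin (r n),
      |((V2mat (q n) (r n) α1 α2 α3 * constMat (r n) (q n) α2 *
          (exchMat (q n) α1)⁻¹ * (V1mat (q n) (r n) α1 α2 α3)⁻¹) *ᵥ s n) i|
        ≤ 1 - η0 := by
  classical
  set L := liminf (fun n => (q n : ℝ) / (m n : ℝ)) atTop with hL
  by_cases hα2 : α2 = 0
  · refine ⟨1/2, by norm_num, ?_⟩
    filter_upwards with n i
    have hc : constMat (r n) (q n) α2 = 0 := by ext; simp [constMat, hα2]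
    rw [hc]
    simp only [Matrix.mul_zero, Matrix.zero_mul, Matrix.zero_mulVec, Pi.zero_apply, abs_zero]
    norm_num
  · have ha : (0:ℝ) < 1 - α1 := by linarith [hα1.2]
    have hb : (0:ℝ) < 1 - α3 := by linarith [hα3.2]
    have hqR : Tendsto (fun n => (q n : ℝ)) atTop atTop := tendsto_natCast_atTop_atTop.comp hq
    have hrR : Tendsto (fun n => (r n : ℝ)) atTop atTop := tendsto_natCast_atTop_atTop.comp hr
    have hmR : Tendsto (fun n => (m n : ℝ)) atTop atTop := tendsto_natCast_atTop_atTop.comp hmtop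
    have hmq : ∀ n, (m n : ℝ) ≤ (q n : ℝ) := by
      intro n
      rw [hm n]
      calc |∑ i, s n i| ≤ ∑ i, |s n i| := Finset.abs_sum_le_sum_abs _ _
        _ = ∑ _i : Fin (q n), (1:ℝ) := by
            refine Finset.sum_congr rfl fun i _ => ?_
            rcases hs n i with h | h <;> simp [h]
        _ = q n := by simp
    have hS1 : ∀ᶠ n in atTop, (1:ℝ) ≤ (q n : ℝ)/(m n : ℝ) := by
      filter_upwards [hmR.eventually_ge_atTop 1] with n hn
      rw [le_div_iff₀ (by linarith)]
      linarith [hmq n]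
    have hL1 : 1 ≤ L := by
      by_cases hbdd : BddAbove {a : ℝ | ∀ᶠ n in atTop, a ≤ (q n:ℝ)/(m n:ℝ)}
      · rw [hL, liminf_eq]; exact le_csSup hbdd hS1
      · exfalso
        apply hα2
        have hL0 : L = 0 := by
          rw [hL, liminf_eq, csSup_of_not_bddAbove hbdd, Real.sSup_empty]
        rw [hL0, mul_zero] at hbound
        exact abs_eq_zero.1 (le_antisymm hbound (abs_nonneg _))
    have hLpos : (0:ℝ) < L := lt_of_lt_of_le one_pos hL1
    -- α2² ≤ α1 α3
    have hev : ∀ᶠ n in atTop, α2^2 ≤ (α1 + (1-α1)/(q n : ℝ)) * (α3 + (1-α3)/(r n : ℝ)) := by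
      filter_upwards [hq.eventually_ge_atTop 1, hr.eventually_ge_atTop 1] with n hqn hrn
      have h := quad_ineq hα1.1 (hpd n) hqn hrn
      have hq0 : (0:ℝ) < q n := by exact_mod_cast hqn
      have hr0 : (0:ℝ) < r n := by exact_mod_cast hrn
      have hg : (α1 + (1-α1)/(q n : ℝ)) * (α3 + (1-α3)/(r n : ℝ))
          = (1 + ((q n:ℝ)-1)*α1) * (1 + ((r n:ℝ)-1)*α3) / ((q n:ℝ) * (r n:ℝ)) := by
        field_simp
        ring
      rw [hg, le_div_iff₀ (by positivity)]
      nlinarith [h]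
    have hlim : Tendsto (fun n => (α1 + (1-α1)/(q n : ℝ)) * (α3 + (1-α3)/(r n : ℝ)))
        atTop (nhds (α1*α3)) := by
      have t1 : Tendsto (fun n => α1 + (1-α1)/(q n : ℝ)) atTop (nhds (α1 + 0)) :=
        tendsto_const_nhds.add (tendsto_const_nhds.div_atTop hqR)
      have t2 : Tendsto (fun n => α3 + (1-α3)/(r n : ℝ)) atTop (nhds (α3 + 0)) :=
        tendsto_const_nhds.add (tendsto_const_nhds.div_atTop hrR)
      have := t1.mul t2
      simpa using this
    have hα13 : α2^2 ≤ α1*α3 := ge_of_tendsto hlim hev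
    -- positivity of (1-η) and α1
    have hsab : (0:ℝ) ≤ Real.sqrt ((1 - α1) / (1 - α3)) := Real.sqrt_nonneg _
    have habs : 0 < |α2| := abs_pos.2 hα2
    have hη1 : 0 < 1 - η := by
      by_contra hcon
      push_neg at hcon
      have h0 : (0:ℝ) ≤ Real.sqrt ((1 - α1) / (1 - α3)) * α1 * L :=
        mul_nonneg (mul_nonneg hsab hα1.1) hLpos.le
      nlinarith [hbound, habs, mul_nonpos_of_nonpos_of_nonneg hcon h0]
    have hα1pos : 0 < α1 := by
      rcases hα1.1.lt_or_eq with h | h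
      · exact h
      · exfalso
        rw [← h, mul_zero, zero_mul] at hbound
        linarith [habs]
    -- constants
    set G := (1 - η/2)/(1-η) with hG
    have hG1 : 1 < G := by rw [hG, lt_div_iff₀ hη1]; linarith
    have hGpos : 0 < G := lt_trans one_pos hG1
    set sg := Real.sqrt G with hsg
    have hsg1 : 1 < sg := by
      rw [hsg, show (1:ℝ) = Real.sqrt 1 by simp]
      exact Real.sqrt_lt_sqrt (by norm_num) hG1
    have hsgpos : 0 < sg := lt_trans one_pos hsg1
    set ε := L * (1 - 1/sg) with hε
    have hεpos : 0 < ε := by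
      apply mul_pos hLpos
      have : 1/sg < 1 := by rw [div_lt_one hsgpos]; exact hsg1
      linarith
    have hLε : L - ε = L / sg := by rw [hε]; field_simp; ring
    have hLεpos : 0 < L - ε := by rw [hLε]; positivity
    have hbdd2 : IsBoundedUnder (· ≥ ·) atTop (fun n => (q n:ℝ)/(m n:ℝ)) :=
      isBoundedUnder_of ⟨0, fun n => by positivity⟩
    have hev4 : ∀ᶠ n in atTop, L - ε < (q n:ℝ)/(m n:ℝ) :=
      eventually_lt_of_lt_liminf (by rw [← hL]; linarith) hbdd2
    refine ⟨η/2, by positivity, ?_⟩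
    filter_upwards [hq.eventually_ge_atTop 2, hr.eventually_ge_atTop 2,
      hmtop.eventually_ge_atTop 1, hev4, hrR.eventually_ge_atTop (G/(G-1))] with n hq2 hr2 hm1 hqm hrG
    intro i
    have hq2R : (2:ℝ) ≤ q n := by exact_mod_cast hq2
    have hr2R : (2:ℝ) ≤ r n := by exact_mod_cast hr2
    have hm1R : (1:ℝ) ≤ m n := by exact_mod_cast hm1
    have hq1 : 1 ≤ q n := le_trans (by norm_num) hq2
    have hr1 : 1 ≤ r n := le_trans (by norm_num) hr2
    have hDpos := Dv_pos (q := q n) (r := r n) (α2 := α2) hα1.1 hα1.2 hα3.1 hα3.2 hα13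
    have hPq := Pv_pos (q := q n) hα1.1 hα1.2
    obtain ⟨hd1l, hd1u⟩ := d1_bounds (q := q n) (r := r n) (α2 := α2) hα1.1 hα1.2 hα3.1 hα3.2 hα13 hq1
    obtain ⟨hd2l, hd2u⟩ := d2_bounds (q := q n) (r := r n) (α2 := α2) hα1.1 hα1.2 hα3.1 hα3.2 hα13 hr1
    have hq0 : (0:ℝ) < q n := by linarith
    have hr0 : (0:ℝ) < r n := by linarith
    have hqfrac : (0:ℝ) < 1 - 1/(q n:ℝ) := by
      have : 1/(q n:ℝ) ≤ 1/2 := by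
        rw [div_le_div_iff₀ hq0 (by norm_num)]
        linarith
      linarith
    have hrfrac : (0:ℝ) < 1 - 1/(r n:ℝ) := by
      have : 1/(r n:ℝ) ≤ 1/2 := by
        rw [div_le_div_iff₀ hr0 (by norm_num)]
        linarith
      linarith
    have hd1pos : 0 < 1/(1-α1) + xv (q n) (r n) α1 α2 α3 :=
      lt_of_lt_of_le (by positivity) hd1l
    have hd2pos : 0 < 1/(1-α3) + zv (q n) (r n) α1 α2 α3 :=
      lt_of_lt_of_le (by positivity) hd2l
    rw [entry_eq hα1.1 hα1.2 hα3.1 hα3.2 hDpos.ne' hd1pos (s n) i]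
    set d1 := 1/(1-α1) + xv (q n) (r n) α1 α2 α3 with hd1
    set d2 := 1/(1-α3) + zv (q n) (r n) α1 α2 α3 with hd2
    have hw1 : (Real.sqrt (1/d1))⁻¹ = Real.sqrt d1 := by
      rw [one_div, Real.sqrt_inv, inv_inv]
    have habsval : |Real.sqrt (1/d2) * (Real.sqrt (1/d1))⁻¹ * α2 * (∑ j, s n j) / Pv (q n) α1|
        = Real.sqrt (1/d2) * Real.sqrt d1 * |α2| * (m n : ℝ) / Pv (q n) α1 := by
      rw [abs_div, abs_of_pos hPq, abs_mul, abs_mul, abs_mul, ← hm n, hw1,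
        abs_of_nonneg (Real.sqrt_nonneg _), abs_of_nonneg (Real.sqrt_nonneg _)]
    rw [habsval]
    -- individual bounds
    have hb1 : Real.sqrt (1/d2) ≤ Real.sqrt ((1-α3)/(1 - 1/(r n:ℝ))) := by
      apply Real.sqrt_le_sqrt
      have h' : 1/d2 ≤ 1/((1 - 1/(r n:ℝ))/(1-α3)) :=
        one_div_le_one_div_of_le (by positivity) hd2l
      rwa [one_div_div] at h'
    have hb2 : Real.sqrt d1 ≤ Real.sqrt (1/(1-α1)) := Real.sqrt_le_sqrt hd1u
    have hsqG : Real.sqrt (1/(1 - 1/(r n:ℝ))) ≤ sg := by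
      rw [hsg]
      apply Real.sqrt_le_sqrt
      have hG' : (0:ℝ) < G - 1 := by linarith
      have hrG' : G ≤ (r n:ℝ) * (G - 1) := (div_le_iff₀ hG').1 hrG
      have h1G : 1/G ≤ 1 - 1/(r n:ℝ) := by
        have h2 : 1/(r n:ℝ) ≤ (G-1)/G := by
          rw [div_le_div_iff₀ hr0 hGpos]
          calc 1 * G = G := one_mul G
            _ ≤ (r n:ℝ) * (G - 1) := hrG'
            _ = (G - 1) * (r n:ℝ) := mul_comm _ _
        have hG2 : (G-1)/G = 1 - 1/G := by field_simp
        linarith [hG2 ▸ h2]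
      have h' : 1/(1 - 1/(r n:ℝ)) ≤ 1/(1/G) := one_div_le_one_div_of_le (by positivity) h1G
      rwa [one_div_one_div] at h'
    have hmain : α1 * L * (m n:ℝ) / Pv (q n) α1 ≤ sg := by
      rw [div_le_iff₀ hPq]
      have h1 : (L - ε) * (m n:ℝ) < q n := by
        have hm0 : (0:ℝ) < m n := by linarith
        have := (lt_div_iff₀ hm0).1 hqm
        linarith
      have hLs : L = sg * (L - ε) := by rw [hLε]; field_simp
      have hα1q : α1 * (q n:ℝ) ≤ Pv (q n) α1 := by unfold Pv; linarith
      calc α1 * L * (m n:ℝ) = sg * (α1 * ((L - ε) * (m n:ℝ))) := by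
            linear_combination (α1 * (m n:ℝ)) * hLs
        _ ≤ sg * (α1 * (q n:ℝ)) := by
            apply mul_le_mul_of_nonneg_left _ hsgpos.le
            exact mul_le_mul_of_nonneg_left h1.le hα1.1
        _ ≤ sg * Pv (q n) α1 := mul_le_mul_of_nonneg_left hα1q hsgpos.le
    -- the chain
    set Pn := Pv (q n) α1 with hPn
    set M := (m n : ℝ) with hM
    set A := Real.sqrt (1/d2) with hA
    set B := Real.sqrt d1 with hB
    set A' := Real.sqrt ((1-α3)/(1 - 1/(r n:ℝ))) with hA'
    set B' := Real.sqrt (1/(1-α1)) with hB'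
    set C' := (1 - η) * Real.sqrt ((1 - α1) / (1 - α3)) * α1 * L with hC'
    have hA0 : 0 ≤ A := Real.sqrt_nonneg _
    have hB0 : 0 ≤ B := Real.sqrt_nonneg _
    have hA'0 : 0 ≤ A' := Real.sqrt_nonneg _
    have hB'0 : 0 ≤ B' := Real.sqrt_nonneg _
    have hM0 : (0:ℝ) ≤ M := by rw [hM]; positivity
    have k1 : A * B ≤ A' * B' := mul_le_mul hb1 hb2 hB0 hA'0
    have k2 : A * B * |α2| ≤ A' * B' * C' := by
      have := mul_le_mul k1 hbound (abs_nonneg α2) (mul_nonneg hA'0 hB'0)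
      exact this
    have hPq' : (0:ℝ) < Pn := hPq
    have k3 : A * B * |α2| * M / Pn ≤ A' * B' * C' * M / Pn :=
      (div_le_div_iff_of_pos_right hPq').2 (mul_le_mul_of_nonneg_right k2 hM0)
    have ksqrt : A' * B' * Real.sqrt ((1 - α1) / (1 - α3))
        = Real.sqrt (1/(1 - 1/(r n:ℝ))) := by
      rw [hA', hB', ← Real.sqrt_mul (by positivity), ← Real.sqrt_mul (by positivity)]
      congr 1
      have hr1' : (0:ℝ) < (r n:ℝ) - 1 := by linarith
      field_simp
    have hK0 : (0:ℝ) ≤ α1 * L * M / Pn :=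
      div_nonneg (mul_nonneg (mul_nonneg hα1.1 hLpos.le) hM0) hPq'.le
    calc A * B * |α2| * M / Pn
        ≤ A' * B' * C' * M / Pn := k3
      _ = (1 - η) * (A' * B' * Real.sqrt ((1 - α1) / (1 - α3))) * (α1 * L * M / Pn) := by
          rw [hC']; ring
      _ = (1 - η) * Real.sqrt (1/(1 - 1/(r n:ℝ))) * (α1 * L * M / Pn) := by rw [ksqrt]
      _ ≤ (1 - η) * sg * sg :=
          mul_le_mul (mul_le_mul_of_nonneg_left hsqG hη1.le) hmain hK0
            (mul_nonneg hη1.le hsgpos.le)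
      _ = 1 - η/2 := by
          rw [mul_assoc, show sg * sg = G from by rw [hsg]; exact Real.mul_self_sqrt hGpos.le,
            hG, mul_comm]
          exact div_mul_cancel₀ _ hη1.ne'
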